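/- Let γ(z) = ∏_{j<k} (z_j − q² z_k). Under conjugation by multiplication by γ(z), the operator G_{j,j+1}^{±1} = ((q⁻¹z_j − q z_{j+1})/(z_j − z_{j+1}))(K_{j,j+1} − 1) + q^{±1} transforms into g_{j,j+1}^{±1} = γ(z)⁻¹ ∘ G_{j,j+1}^{±1} ∘ γ(z) = ((q z_j − q⁻¹ z_{j+1})/(z_j − z_{j+1}))(1 − K_{j,j+1}) − q^{∓1}. -/

import Mathlib

/-- The exchange operator `K_{j,k}` on functions of `z₁,…,z_N`. -/
def Kex {N : ℕ} (j k : Fin N) (f : (Fin N → ℂ) → ℂ) : (Fin N → ℂ) → ℂ :=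
  fun z => f (z ∘ Equiv.swap j k)

/-- `G_{j,k}^{+1} = ((q⁻¹ z_j − q z_k)/(z_j − z_k)) (K_{j,k} − 1) + q`. -/
noncomputable def Gop {N : ℕ} (q : ℂ) (j k : Fin N) (f : (Fin N → ℂ) → ℂ) :
    (Fin N → ℂ) → ℂ :=
  fun z => (q⁻¹ * z j - q * z k) / (z j - z k) * (Kex j k f z - f z) + q * f z

/-- `G_{j,k}^{-1} = ((q⁻¹ z_j − q z_k)/(z_j − z_k)) (K_{j,k} − 1) + q⁻¹`. -/
noncomputable def GopInv {N : ℕ} (q : ℂ) (j k : Fin N) (f : (Fin N → ℂ) → ℂ) :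
    (Fin N → ℂ) → ℂ :=
  fun z => (q⁻¹ * z j - q * z k) / (z j - z k) * (Kex j k f z - f z) + q⁻¹ * f z

/-- `g_{j,k}^{+1} = ((q z_j − q⁻¹ z_k)/(z_j − z_k)) (1 − K_{j,k}) − q⁻¹`. -/
noncomputable def gop {N : ℕ} (q : ℂ) (j k : Fin N) (f : (Fin N → ℂ) → ℂ) :
    (Fin N → ℂ) → ℂ :=
  fun z => (q * z j - q⁻¹ * z k) / (z j - z k) * (f z - Kex j k f z) - q⁻¹ * f z

/-- `g_{j,k}^{-1} = ((q z_j − q⁻¹ z_k)/(z_j − z_k)) (1 − K_{j,k}) − q`. -/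
noncomputable def gopInv {N : ℕ} (q : ℂ) (j k : Fin N) (f : (Fin N → ℂ) → ℂ) :
    (Fin N → ℂ) → ℂ :=
  fun z => (q * z j - q⁻¹ * z k) / (z j - z k) * (f z - Kex j k f z) - q * f z

/-- `γ(z) = ∏_{j<k} (z_j − q² z_k)`. -/
noncomputable def gammaFac (N : ℕ) (q : ℂ) (z : Fin N → ℂ) : ℂ :=
  ∏ j : Fin N, ∏ k ∈ Finset.univ.filter (fun k => j < k), (z j - q ^ 2 * z k)

lemma gammaFac_eq (N : ℕ) (q : ℂ) (z : Fin N → ℂ) :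
    gammaFac N q z =
      ∏ p ∈ (Finset.univ ×ˢ Finset.univ).filter (fun p : Fin N × Fin N => p.1 < p.2),
        (z p.1 - q ^ 2 * z p.2) := by
  rw [gammaFac, Finset.prod_filter,
    Finset.prod_product' (f := fun a b : Fin N => if a < b then z a - q ^ 2 * z b else 1)]
  simp [Finset.prod_filter]

lemma swap_lt {N : ℕ} {j k a b : Fin N} (hjk : (j : ℕ) + 1 = (k : ℕ)) (hab : a < b)
    (hne : ¬(a = j ∧ b = k)) :
    Equiv.swap j k a < Equiv.swap j k b := by
  have hab' : (a : ℕ) < b := hab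
  by_cases haj : a = j
  · have hbk : b ≠ k := fun h => hne ⟨haj, h⟩
    have hbj : b ≠ j := by intro h; rw [haj, h] at hab'; omega
    rw [haj, Equiv.swap_apply_left, Equiv.swap_apply_of_ne_of_ne hbj hbk]
    have h1 : (b : ℕ) ≠ k := fun h => hbk (Fin.ext h)
    have h2 : (j : ℕ) < b := by rw [haj] at hab'; exact hab'
    exact Fin.lt_def.2 (by omega)
  by_cases hak : a = k
  · have hbj : b ≠ j := by intro h; rw [hak, h] at hab'; omega
    have hbk : b ≠ k := by intro h; rw [hak, h] at hab'; omega
    rw [hak, Equiv.swap_apply_right, Equiv.swap_apply_of_ne_of_ne hbj hbk]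
    rw [hak] at hab'
    exact Fin.lt_def.2 (by omega)
  rw [Equiv.swap_apply_of_ne_of_ne haj hak]
  by_cases hbj : b = j
  · rw [hbj, Equiv.swap_apply_left]
    rw [hbj] at hab'
    exact Fin.lt_def.2 (by omega)
  by_cases hbk : b = k
  · rw [hbk, Equiv.swap_apply_right]
    have h1 : (a : ℕ) ≠ j := fun h => haj (Fin.ext h)
    rw [hbk] at hab'
    exact Fin.lt_def.2 (by omega)
  rw [Equiv.swap_apply_of_ne_of_ne hbj hbk]
  exact hab

lemma gammaFac_swap {N : ℕ} (q : ℂ) (z : Fin N → ℂ) {j k : Fin N}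
    (hjk : (j : ℕ) + 1 = (k : ℕ)) :
    gammaFac N q (z ∘ Equiv.swap j k) * (z j - q ^ 2 * z k)
      = gammaFac N q z * (z k - q ^ 2 * z j) := by
  classical
  have hjklt : j < k := Fin.lt_def.2 (by omega)
  set P : Finset (Fin N × Fin N) :=
    (Finset.univ ×ˢ Finset.univ).filter (fun p : Fin N × Fin N => p.1 < p.2) with hP
  have hmem : (j, k) ∈ P := by simp [hP, hjklt]
  set Q := P.erase (j, k) with hQ
  have key : ∀ p : Fin N × Fin N, p ∈ Q →
      (Equiv.swap j k p.1, Equiv.swap j k p.2) ∈ Q := by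
    intro p hp
    simp only [hQ, Finset.mem_erase, hP, Finset.mem_filter, Finset.mem_product,
      Finset.mem_univ, true_and, and_true] at hp ⊢
    obtain ⟨hpne, hplt⟩ := hp
    refine ⟨?_, swap_lt hjk hplt (fun h => hpne (Prod.ext h.1 h.2))⟩
    intro h
    have h1' : Equiv.swap j k p.1 = j := congrArg Prod.fst h
    have h2' : Equiv.swap j k p.2 = k := congrArg Prod.snd h
    have e1 : p.1 = k := by
      apply (Equiv.swap j k).injective
      rw [h1', Equiv.swap_apply_right]
    have e2 : p.2 = j := by
      apply (Equiv.swap j k).injective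
      rw [h2', Equiv.swap_apply_left]
    rw [e1, e2] at hplt
    exact absurd hplt (not_lt.2 hjklt.le)
  have h1 : gammaFac N q z = (z j - q ^ 2 * z k) * ∏ p ∈ Q, (z p.1 - q ^ 2 * z p.2) := by
    rw [gammaFac_eq, ← Finset.mul_prod_erase P _ hmem]
  have h2 : gammaFac N q (z ∘ Equiv.swap j k)
      = (z k - q ^ 2 * z j) * ∏ p ∈ Q, (z p.1 - q ^ 2 * z p.2) := by
    rw [gammaFac_eq, ← Finset.mul_prod_erase P _ hmem]
    congr 1
    · simp
    · refine Finset.prod_nbij' (fun p => (Equiv.swap j k p.1, Equiv.swap j k p.2))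
        (fun p => (Equiv.swap j k p.1, Equiv.swap j k p.2)) key key ?_ ?_ ?_
      · intro p _; simp
      · intro p _; simp
      · intro p _; simp
  rw [h1, h2]; ring

lemma gammaFac_ne_zero {N : ℕ} (q : ℂ) (z : Fin N → ℂ)
    (hgen : ∀ i k : Fin N, i ≠ k → z i ≠ q ^ 2 * z k) : gammaFac N q z ≠ 0 := by
  rw [gammaFac]
  refine Finset.prod_ne_zero_iff.2 fun a _ => Finset.prod_ne_zero_iff.2 fun b hb => ?_
  rw [Finset.mem_filter] at hb
  exact sub_ne_zero.2 (hgen a b hb.2.ne)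

lemma scalar1 (q a b γ F K : ℂ) (hq : q ≠ 0) (hγ : γ ≠ 0) (hab : a - b ≠ 0)
    (h3 : a - q ^ 2 * b ≠ 0) :
    γ⁻¹ * ((q⁻¹ * a - q * b) / (a - b) * (γ * (b - q ^ 2 * a) / (a - q ^ 2 * b) * K - γ * F)
        + q * (γ * F))
      = (q * a - q⁻¹ * b) / (a - b) * (F - K) - q⁻¹ * F := by
  have h1 : (q⁻¹ * a - q * b) / (a - b) * (γ * (b - q ^ 2 * a) / (a - q ^ 2 * b) * K - γ * F)
        + q * (γ * F)
      = γ * ((q⁻¹ * a - q * b) / (a - b) * ((b - q ^ 2 * a) / (a - q ^ 2 * b) * K - F)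
        + q * F) := by ring
  rw [h1, ← mul_assoc, inv_mul_cancel₀ hγ, one_mul]
  field_simp
  ring
lemma scalar2 (q a b γ F K : ℂ) (hq : q ≠ 0) (hγ : γ ≠ 0) (hab : a - b ≠ 0)
    (h3 : a - q ^ 2 * b ≠ 0) :
    γ⁻¹ * ((q⁻¹ * a - q * b) / (a - b) * (γ * (b - q ^ 2 * a) / (a - q ^ 2 * b) * K - γ * F)
        + q⁻¹ * (γ * F))
      = (q * a - q⁻¹ * b) / (a - b) * (F - K) - q * F := by
  have h1 : (q⁻¹ * a - q * b) / (a - b) * (γ * (b - q ^ 2 * a) / (a - q ^ 2 * b) * K - γ * F)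
        + q⁻¹ * (γ * F)
      = γ * ((q⁻¹ * a - q * b) / (a - b) * ((b - q ^ 2 * a) / (a - q ^ 2 * b) * K - F)
        + q⁻¹ * F) := by ring
  rw [h1, ← mul_assoc, inv_mul_cancel₀ hγ, one_mul]
  field_simp
  ring

/-- under conjugation by multiplication by `γ(z) = ∏_{j<k}(z_j − q² z_k)`,
the operator `G_{j,j+1}^{±1}` becomes
`g_{j,j+1}^{±1} = ((q z_j − q⁻¹ z_{j+1})/(z_j − z_{j+1}))(1 − K_{j,j+1}) − q^{∓1}`
(stated at points where `γ` and its swap do not vanish). -/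
theorem gamma_conjugation {N : ℕ} (q : ℂ) (hq0 : q ≠ 0) (hq2 : q ^ 2 ≠ 1)
    (j : ℕ) (hj : j + 1 < N) (f : (Fin N → ℂ) → ℂ) (z : Fin N → ℂ)
    (hgen : ∀ i k : Fin N, i ≠ k → z i ≠ q ^ 2 * z k)
    (hne : z ⟨j, by omega⟩ ≠ z ⟨j + 1, hj⟩) :
    (gammaFac N q z)⁻¹ *
        Gop q ⟨j, by omega⟩ ⟨j + 1, hj⟩ (fun w => gammaFac N q w * f w) z
      = gop q ⟨j, by omega⟩ ⟨j + 1, hj⟩ f z ∧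
    (gammaFac N q z)⁻¹ *
        GopInv q ⟨j, by omega⟩ ⟨j + 1, hj⟩ (fun w => gammaFac N q w * f w) z
      = gopInv q ⟨j, by omega⟩ ⟨j + 1, hj⟩ f z := by
  set j0 : Fin N := ⟨j, by omega⟩
  set k0 : Fin N := ⟨j + 1, hj⟩
  have hjk : (j0 : ℕ) + 1 = (k0 : ℕ) := rfl
  have hj0k0 : j0 ≠ k0 := by
    intro h; have := congrArg Fin.val h; simp [j0, k0] at this
  have hγ : gammaFac N q z ≠ 0 := gammaFac_ne_zero q z hgen
  have h3 : z j0 - q ^ 2 * z k0 ≠ 0 := sub_ne_zero.2 (hgen j0 k0 hj0k0)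
  have hab : z j0 - z k0 ≠ 0 := sub_ne_zero.2 hne
  have hswap := gammaFac_swap q z hjk
  have hG' : gammaFac N q (z ∘ Equiv.swap j0 k0)
      = gammaFac N q z * (z k0 - q ^ 2 * z j0) / (z j0 - q ^ 2 * z k0) := by
    rw [eq_div_iff h3]; exact hswap
  constructor
  · simp only [Gop, gop, Kex, hG']
    exact scalar1 q (z j0) (z k0) (gammaFac N q z) (f z) (f (z ∘ Equiv.swap j0 k0))
      hq0 hγ hab h3
  · simp only [GopInv, gopInv, Kex, hG']
    exact scalar2 q (z j0) (z k0) (gammaFac N q z) (f z) (f (z ∘ Equiv.swap j0 k0))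
      hq0 hγ hab h3
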